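/- Let f and g be interpretation triples from m to n with f ≻ g, let h be an interpretation triple from n to p and let k be an interpretation triple from q to m. Then h ∘ f ≻ h ∘ g and f ∘ k ≻ g ∘ k; that is, the relation ≻ is compatible with composition of interpretation triples on both sides. -/

import Mathlib

/-- An interpretation triple from `m` to `n`: a monotone covariant current map,
a monotone contravariant current map, and a monotone heat map. -/
structure ITriple (X Y M : Type*) [Preorder X] [Preorder Y] [Preorder M]
    (m n : ℕ) where
  cov : (Fin m → X) → (Fin n → X)
  contra : (Fin n → Y) → (Fin m → Y)
  heat : (Fin m → X) × (Fin n → Y) → M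
  cov_mono : Monotone cov
  contra_mono : Monotone contra
  heat_mono : Monotone heat

variable {X Y M : Type*} [Preorder X] [Preorder Y] [AddCommMonoid M] [PartialOrder M] [IsOrderedAddMonoid M]

/-- Composition of interpretation triples: `g.comp f` is `g` after `f`. -/
def ITriple.comp {m n p : ℕ} (g : ITriple X Y M n p) (f : ITriple X Y M m n) :
    ITriple X Y M m p where
  cov := g.cov ∘ f.cov
  contra := f.contra ∘ g.contra
  heat := fun xy => f.heat (xy.1, g.contra xy.2) + g.heat (f.cov xy.1, xy.2)
  cov_mono := g.cov_mono.comp f.cov_mono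
  contra_mono := f.contra_mono.comp g.contra_mono
  heat_mono := by
    intro a b hab
    exact add_le_add
      (f.heat_mono (Prod.mk_le_mk.mpr ⟨hab.1, g.contra_mono hab.2⟩))
      (g.heat_mono (Prod.mk_le_mk.mpr ⟨f.cov_mono hab.1, hab.2⟩))

/-- The strict order `f ≻ g` on interpretation triples: covariant and contravariant
parts dominate pointwise and the heat strictly dominates. -/
def ITriple.Succ {m n : ℕ} (f g : ITriple X Y M m n) : Prop :=
  ∀ (x : Fin m → X) (y : Fin n → Y),
    g.cov x ≤ f.cov x ∧ g.contra y ≤ f.contra y ∧ g.heat (x, y) < f.heat (x, y)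

/-- The strict order `≻` on interpretation triples is compatible
with composition on both sides. -/
theorem iTriple_succ_comp_compat
    (hadd : ∀ a b c : M, a < b → c + a < c + b)
    {m n p q : ℕ} (f g : ITriple X Y M m n) (h : ITriple X Y M n p)
    (k : ITriple X Y M q m) (hfg : f.Succ g) :
    (h.comp f).Succ (h.comp g) ∧ (f.comp k).Succ (g.comp k) := by
  have key : ∀ a b c d : M, a < b → c ≤ d → a + c < b + d := by
    intro a b c d h1 h2
    calc a + c = c + a := add_comm _ _
      _ < c + b := hadd _ _ _ h1
      _ = b + c := add_comm _ _
      _ ≤ b + d := add_le_add_right h2 _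
  constructor
  · intro x y
    obtain ⟨h1, h2, h3⟩ := hfg x (h.contra y)
    exact ⟨h.cov_mono h1, h2,
      key _ _ _ _ h3 (h.heat_mono (Prod.mk_le_mk.mpr ⟨h1, le_refl y⟩))⟩
  · intro x y
    obtain ⟨h1, h2, h3⟩ := hfg (k.cov x) y
    refine ⟨h1, k.contra_mono h2, ?_⟩
    calc k.heat (x, g.contra y) + g.heat (k.cov x, y)
        ≤ k.heat (x, f.contra y) + g.heat (k.cov x, y) :=
          add_le_add_left (k.heat_mono (Prod.mk_le_mk.mpr ⟨le_refl x, h2⟩)) _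
      _ < k.heat (x, f.contra y) + f.heat (k.cov x, y) := hadd _ _ _ h3
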